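/- Let Q be a continuous, nonnegative, nonzero, compactly supported steady state of the gravitational Vlasov–Poisson system of the form Q(x,v) = F(|v|²/2 + φ_Q(x)) with F continuous, F(e)=0 for e ≥ e₀ (some e₀<0), F strictly decreasing and C¹ on (-∞,e₀). Then F(e) = Q*(a_{φ_Q}(e)) for all e ∈ [φ_Q(0), 0), and consequently Q^{*φ_Q} = Q on ℝ⁶. -/

import Mathlib

open MeasureTheory Real Filter Set ENNReal

noncomputable section

abbrev R3 := EuclideanSpace ℝ (Fin 3)

def mX (φ : R3 → ℝ) : ℝ := ⨅ x : R3, (1 + ‖x‖) * |φ x|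

def memX (φ : R3 → ℝ) : Prop :=
  Continuous φ ∧ (∀ x, φ x ≤ 0) ∧ Tendsto φ (cocompact R3) (nhds 0) ∧
    Integrable (fun x => ‖fderiv ℝ φ x‖ ^ 2) ∧ 0 < mX φ

def memE (f : R3 × R3 → ℝ) : Prop :=
  (∀ p, 0 ≤ f p) ∧ Integrable f ∧ MemLp f ⊤ volume ∧
    Integrable (fun p : R3 × R3 => ‖p.2‖ ^ 2 * f p)

def aphi (φ : R3 → ℝ) (e : ℝ) : ℝ :=
  (8 * π * Real.sqrt 2 / 3) * ∫ x : R3, (max (e - φ x) 0) ^ ((3 : ℝ) / 2)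

/-- Distribution function `μ_f(s) = meas{f > s}`. -/
def distFun (f : R3 × R3 → ℝ) (s : ℝ) : ℝ≥0∞ := volume {p : R3 × R3 | f p > s}

/-- Schwarz symmetric decreasing rearrangement on `ℝ₊`. -/
def schwarz (f : R3 × R3 → ℝ) (t : ℝ) : ℝ :=
  sInf {s : ℝ | 0 ≤ s ∧ distFun f s ≤ ENNReal.ofReal t}

/-- The generalized rearrangement `f^{*φ}` with respect to the microscopic energy. -/
def genRearr (f : R3 × R3 → ℝ) (φ : R3 → ℝ) (p : R3 × R3) : ℝ :=
  if ‖p.2‖ ^ 2 / 2 + φ p.1 < 0 then schwarz f (aphi φ (‖p.2‖ ^ 2 / 2 + φ p.1)) else 0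


def rho (f : R3 × R3 → ℝ) (x : R3) : ℝ := ∫ v, f (x, v)

/-- Poisson field `φ_f(x) = -(1/(4π)) ∫ ρ_f(y)/|x-y| dy`. -/
def phiF (f : R3 × R3 → ℝ) (x : R3) : ℝ :=
  -(1 / (4 * π)) * ∫ y, rho f y / ‖x - y‖


lemma kernel_locallyIntegrable : LocallyIntegrable (fun z : R3 => ‖z‖⁻¹) volume := by
  rw [locallyIntegrable_iff]
  intro k hk
  obtain ⟨R, hR⟩ := hk.isBounded.subset_closedBall 0
  refine IntegrableOn.mono_set ?_ hR
  constructor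
  · exact (measurable_norm.inv).aestronglyMeasurable
  · rw [hasFiniteIntegral_iff_norm]
    have h1 : ∀ z : R3, ENNReal.ofReal ‖‖z‖⁻¹‖ = ENNReal.ofReal ‖z‖⁻¹ := by
      intro z; rw [Real.norm_eq_abs, abs_of_nonneg (by positivity)]
    simp_rw [h1]
    rw [lintegral_eq_lintegral_meas_lt (f := fun z : R3 => ‖z‖⁻¹) _ (Eventually.of_forall fun z => inv_nonneg.2 (norm_nonneg z))
      (measurable_norm.inv.aemeasurable)]
    have hsub : ∀ t : ℝ, 0 < t → {z : R3 | t < ‖z‖⁻¹} ⊆ Metric.closedBall 0 t⁻¹ := by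
      intro t ht z hz
      simp only [mem_setOf_eq] at hz
      have : ‖z‖ ≤ t⁻¹ := by
        rw [← inv_inv ‖z‖]
        exact inv_anti₀ ht hz.le
      simpa [Metric.mem_closedBall, dist_zero_right] using this
    have hunion : Ioi (0:ℝ) = Ioc 0 1 ∪ Ioi 1 := by
      ext t; simp only [mem_Ioi, mem_union, mem_Ioc]
      constructor
      · intro h; rcases le_or_gt t 1 with h1 | h1
        · exact Or.inl ⟨h, h1⟩
        · exact Or.inr h1
      · rintro (⟨h, _⟩ | h)
        · exact h
        · linarith
    rw [hunion, lintegral_union measurableSet_Ioi (by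
      rw [Set.disjoint_left]; intro t ht ht'; simp at ht ht'; linarith [ht.2])]
    have hfin1 : ∫⁻ t in Ioc (0:ℝ) 1,
        (volume.restrict (Metric.closedBall (0:R3) R)) {z : R3 | t < ‖z‖⁻¹} < ⊤ := by
      calc ∫⁻ t in Ioc (0:ℝ) 1, (volume.restrict (Metric.closedBall (0:R3) R)) {z : R3 | t < ‖z‖⁻¹}
          ≤ ∫⁻ _ in Ioc (0:ℝ) 1, volume (Metric.closedBall (0:R3) R) := by
            refine lintegral_mono fun t => ?_
            calc (volume.restrict (Metric.closedBall (0:R3) R)) {z : R3 | t < ‖z‖⁻¹}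
                ≤ (volume.restrict (Metric.closedBall (0:R3) R)) univ := measure_mono (subset_univ _)
              _ = volume (Metric.closedBall (0:R3) R) := by
                  rw [Measure.restrict_apply_univ]
        _ = volume (Metric.closedBall (0:R3) R) * volume (Ioc (0:ℝ) 1) := setLIntegral_const _ _
        _ < ⊤ := by
            apply ENNReal.mul_lt_top measure_closedBall_lt_top
            simp [Real.volume_Ioc]
    have hfin2 : ∫⁻ t in Ioi (1:ℝ),
        (volume.restrict (Metric.closedBall (0:R3) R)) {z : R3 | t < ‖z‖⁻¹} < ⊤ := by
      have hint : IntegrableOn (fun t : ℝ => t ^ (-3:ℝ)) (Ioi 1) volume :=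
        integrableOn_Ioi_rpow_of_lt (by norm_num) one_pos
      have hfi := hint.2
      rw [hasFiniteIntegral_iff_norm] at hfi
      refine lt_of_le_of_lt ?_ (ENNReal.mul_lt_top hfi (show volume (Metric.ball (0:R3) 1) < ⊤ from measure_ball_lt_top))
      rw [← lintegral_mul_const' _ _ (show volume (Metric.ball (0:R3) 1) < ⊤ from measure_ball_lt_top).ne]
      refine setLIntegral_mono_ae (by fun_prop) (Eventually.of_forall fun t (ht : 1 < t) => ?_)
      have ht0 : (0:ℝ) < t := by linarith
      calc (volume.restrict (Metric.closedBall (0:R3) R)) {z : R3 | t < ‖z‖⁻¹}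
          ≤ volume (Metric.closedBall (0:R3) t⁻¹) :=
            le_trans (Measure.restrict_le_self _) (measure_mono (hsub t ht0))
        _ = ENNReal.ofReal (t⁻¹ ^ (Module.finrank ℝ R3)) * volume (Metric.ball (0:R3) 1) :=
            Measure.addHaar_closedBall _ _ (by positivity)
        _ ≤ ENNReal.ofReal ‖t ^ (-3:ℝ)‖ * volume (Metric.ball (0:R3) 1) := by
            gcongr
            rw [finrank_euclideanSpace, Fintype.card_fin, Real.norm_eq_abs,
              abs_of_nonneg (Real.rpow_nonneg ht0.le _)]
            rw [show (-3:ℝ) = -((3:ℕ):ℝ) by norm_num, Real.rpow_neg ht0.le,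
              Real.rpow_natCast, ← inv_pow]
    exact ENNReal.add_lt_top.2 ⟨hfin1, hfin2⟩

lemma vol_fiber (c : ℝ) : volume {v : R3 | ‖v‖^2/2 < c}
    = ENNReal.ofReal ((8 * π * Real.sqrt 2 / 3) * (max c 0) ^ ((3:ℝ)/2)) := by
  set m := max c 0 with hm
  have hm0 : (0:ℝ) ≤ m := le_max_right _ _
  have hset : {v : R3 | ‖v‖^2/2 < c} = Metric.ball 0 (Real.sqrt (2*m)) := by
    ext v
    simp only [mem_setOf_eq, Metric.mem_ball, dist_zero_right]
    rcases le_or_gt c 0 with hc | hc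
    · have : m = 0 := by simp [hm, hc]
      rw [this]
      simp only [mul_zero, Real.sqrt_zero]
      constructor
      · intro h; nlinarith [sq_nonneg ‖v‖]
      · intro h; exact absurd h (not_lt.2 (norm_nonneg v))
    · have hmc : m = c := max_eq_left hc.le
      rw [hmc, Real.lt_sqrt (norm_nonneg v)]
      constructor <;> intro h <;> linarith
  rw [hset, EuclideanSpace.volume_ball]
  have hΓ : Real.Gamma ((Fintype.card (Fin 3) : ℝ)/2 + 1) = 3/4 * Real.sqrt π := by
    simp only [Fintype.card_fin]
    rw [show ((3:ℕ):ℝ)/2 = 1/2 + 1 by norm_num, Real.Gamma_add_one (by norm_num),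
      Real.Gamma_add_one (by norm_num), Real.Gamma_one_half_eq]
    ring
  rw [hΓ, Fintype.card_fin, ← ENNReal.ofReal_pow (Real.sqrt_nonneg _),
    ← ENNReal.ofReal_mul (by positivity)]
  congr 1
  have c2 : Real.sqrt 2 ^ 3 = 2 * Real.sqrt 2 := by
    rw [pow_succ, Real.sq_sqrt (by norm_num : (0:ℝ) ≤ 2)]
  have cπ : Real.sqrt π ^ 3 = π * Real.sqrt π := by
    rw [pow_succ, Real.sq_sqrt Real.pi_pos.le]
  have h3 : m ^ ((3:ℝ)/2) = Real.sqrt m ^ 3 := by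
    rw [← Real.rpow_natCast (Real.sqrt m) 3, Real.sqrt_eq_rpow, ← Real.rpow_mul hm0]
    norm_num
  have hπ : Real.sqrt π ≠ 0 := (Real.sqrt_pos.2 Real.pi_pos).ne'
  rw [Real.sqrt_mul (by norm_num : (0:ℝ) ≤ 2), mul_pow, c2, cπ, h3]
  field_simp
  ring

lemma vol_sublevel (φ : R3 → ℝ) (hφ : Continuous φ) (e : ℝ)
    (hg : Integrable (fun x => max (e - φ x) 0 ^ ((3:ℝ)/2))) :
    volume {p : R3 × R3 | ‖p.2‖^2/2 + φ p.1 < e} = ENNReal.ofReal (aphi φ e) := by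
  have hS : MeasurableSet {p : R3 × R3 | ‖p.2‖^2/2 + φ p.1 < e} := by
    have : Continuous fun p : R3 × R3 => ‖p.2‖^2/2 + φ p.1 := by fun_prop
    exact measurableSet_lt this.measurable measurable_const
  rw [MeasureTheory.Measure.volume_eq_prod, Measure.prod_apply hS]
  have hfiber : ∀ x : R3, (Prod.mk x ⁻¹' {p : R3 × R3 | ‖p.2‖^2/2 + φ p.1 < e})
      = {v : R3 | ‖v‖^2/2 < e - φ x} := by
    intro x; ext v
    simp only [mem_preimage, mem_setOf_eq]
    constructor <;> intro h <;> linarith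
  simp_rw [hfiber, vol_fiber]
  rw [← ofReal_integral_eq_lintegral_ofReal (hg.const_mul _)
    (Eventually.of_forall fun x => by positivity)]
  unfold aphi
  rw [MeasureTheory.integral_const_mul]


variable {Q : R3 × R3 → ℝ}

lemma rho_cont (hQc : Continuous Q) (hQsupp : HasCompactSupport Q) : Continuous (rho Q) := by
  obtain ⟨C, hC⟩ := hQsupp.exists_bound_of_continuous hQc
  have hC0 : 0 ≤ C := le_trans (norm_nonneg _) (hC ⟨0, 0⟩)
  set K : Set R3 := Prod.snd '' tsupport Q with hK
  have hKc : IsCompact K := (hQsupp.image continuous_snd)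
  apply continuous_of_dominated (bound := K.indicator fun _ => C)
  · intro x
    exact (hQc.comp (Continuous.prodMk_right x)).aestronglyMeasurable
  · intro x
    refine Eventually.of_forall fun v => ?_
    by_cases hv : v ∈ K
    · rw [indicator_of_mem hv]; exact hC (x, v)
    · rw [indicator_of_notMem hv]
      have : Q (x, v) = 0 := by
        by_contra h
        exact hv ⟨(x, v), subset_tsupport Q h, rfl⟩
      simp [this]
  · rw [integrable_indicator_iff hKc.measurableSet]
    exact integrableOn_const hKc.measure_lt_top.ne
  · exact Eventually.of_forall fun v => hQc.comp (Continuous.prodMk_left v)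

lemma rho_supp (hQsupp : HasCompactSupport Q) : HasCompactSupport (rho Q) := by
  apply HasCompactSupport.intro (hQsupp.image continuous_fst)
  intro x hx
  have : ∀ v, Q (x, v) = 0 := fun v => by
    by_contra h
    exact hx ⟨(x, v), subset_tsupport Q h, rfl⟩
  simp only [rho, this, integral_zero]

lemma rho_nonneg (hQpos : ∀ p, 0 ≤ Q p) : ∀ x, 0 ≤ rho Q x := fun x =>
  integral_nonneg fun v => hQpos (x, v)

lemma rho_integrable (hQc : Continuous Q) (hQsupp : HasCompactSupport Q) : Integrable (rho Q) :=
  (rho_cont hQc hQsupp).integrable_of_hasCompactSupport (rho_supp hQsupp)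

lemma phi_eq_conv : phiF Q = fun x =>
    -(1 / (4 * π)) * MeasureTheory.convolution (rho Q) (fun z : R3 => ‖z‖⁻¹)
      (ContinuousLinearMap.mul ℝ ℝ) volume x := by
  funext x
  unfold phiF
  congr 1

lemma phi_cont (hQc : Continuous Q) (hQsupp : HasCompactSupport Q) : Continuous (phiF Q) := by
  rw [phi_eq_conv]
  exact continuous_const.mul ((rho_supp hQsupp).continuous_convolution_left _
    (rho_cont hQc hQsupp) kernel_locallyIntegrable)

lemma phi_decay (hQc : Continuous Q) (hQpos : ∀ p, 0 ≤ Q p) (hQsupp : HasCompactSupport Q) (e : ℝ) (he : e < 0) :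
    ∃ M : ℝ, ∀ x : R3, M ≤ ‖x‖ → e < phiF Q x := by
  obtain ⟨R, hR⟩ := ((rho_supp (Q := Q) hQsupp).isBounded).subset_closedBall 0
  set A : ℝ := (1 / (4 * π)) * ∫ y, rho Q y with hA
  have hπ : (0:ℝ) < 1 / (4 * π) := by positivity
  have hA0 : 0 ≤ A := mul_nonneg hπ.le (integral_nonneg (rho_nonneg hQpos))
  set d : ℝ := A / (-e) + 1 with hd
  have hd0 : (0:ℝ) < d := by
    have : 0 ≤ A / -e := div_nonneg hA0 (by linarith)
    rw [hd]; linarith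
  have hAd : A / d < -e := by
    have h2 : -e * (A / -e + 1) = A + -e := by
      rw [mul_add, mul_one, mul_comm (-e) (A / -e), div_mul_cancel₀ A (by linarith : (-e) ≠ 0)]
    rw [div_lt_iff₀ hd0, hd, h2]
    linarith
  refine ⟨R + d, fun x hx => ?_⟩
  have hbound : ∀ y, rho Q y / ‖x - y‖ ≤ rho Q y / d := by
    intro y
    by_cases hy : rho Q y = 0
    · simp [hy]
    · have hy' : y ∈ tsupport (rho Q) := subset_tsupport _ hy
      have hyR : ‖y‖ ≤ R := by
        have := hR hy'
        simpa [Metric.mem_closedBall, dist_zero_right] using this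
      have hxy : d ≤ ‖x - y‖ := by
        have := norm_sub_norm_le x y
        linarith
      exact div_le_div_of_nonneg_left (rho_nonneg hQpos y) hd0 hxy
  have hI : ∫ y, rho Q y / ‖x - y‖ ≤ (∫ y, rho Q y) / d := by
    rw [← integral_div]
    exact integral_mono_of_nonneg
      (Eventually.of_forall fun y => div_nonneg (rho_nonneg hQpos y) (norm_nonneg _))
      ((rho_integrable hQc hQsupp).div_const d) (Eventually.of_forall hbound)
  have hAd' : (1 / (4 * π)) * ∫ y, rho Q y / ‖x - y‖ ≤ A / d := by
    rw [hA, mul_div_assoc]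
    exact mul_le_mul_of_nonneg_left hI hπ.le
  unfold phiF
  nlinarith

lemma g_integrable {φ : R3 → ℝ} (hφ : Continuous φ) {e : ℝ}
    (hM : ∃ M, ∀ x : R3, M ≤ ‖x‖ → e < φ x) :
    Integrable (fun x : R3 => max (e - φ x) 0 ^ ((3:ℝ)/2)) := by
  obtain ⟨M, hM⟩ := hM
  have hcont : Continuous (fun x : R3 => max (e - φ x) 0 ^ ((3:ℝ)/2)) :=
    ((continuous_const.sub hφ).max continuous_const).rpow_const
      (fun x => Or.inr (by norm_num))
  apply hcont.integrable_of_hasCompactSupport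
  apply HasCompactSupport.intro (isCompact_closedBall (0:R3) (max M 0))
  intro x hx
  have hxM : M ≤ ‖x‖ := by
    simp only [Metric.mem_closedBall, dist_zero_right, not_le] at hx
    exact le_trans (le_max_left _ _) hx.le
  have := hM x hxM
  rw [max_eq_right (by linarith), Real.zero_rpow (by norm_num)]

lemma aphi_nonneg {φ : R3 → ℝ} (e : ℝ) : 0 ≤ aphi φ e := by
  apply mul_nonneg (by positivity)
  exact integral_nonneg fun x => Real.rpow_nonneg (le_max_right _ _) _

lemma aphi_mono {φ : R3 → ℝ} (hφ : Continuous φ) {e e' : ℝ} (h : e ≤ e')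
    (hM' : ∃ M, ∀ x : R3, M ≤ ‖x‖ → e' < φ x) : aphi φ e ≤ aphi φ e' := by
  apply mul_le_mul_of_nonneg_left _ (by positivity)
  apply integral_mono_of_nonneg
    (Eventually.of_forall fun x => Real.rpow_nonneg (le_max_right _ _) _)
    (g_integrable hφ hM')
  refine Eventually.of_forall fun x => ?_
  exact Real.rpow_le_rpow (le_max_right _ _)
    (max_le_max (by linarith) le_rfl) (by norm_num)

lemma aphi_strict {φ : R3 → ℝ} (hφ : Continuous φ) {e e' : ℝ} (h : e < e')
    (hM : ∃ M, ∀ x : R3, M ≤ ‖x‖ → e < φ x)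
    (hM' : ∃ M, ∀ x : R3, M ≤ ‖x‖ → e' < φ x)
    (x₀ : R3) (hx₀ : φ x₀ ≤ e) : aphi φ e < aphi φ e' := by
  have hg := g_integrable hφ hM
  have hg' := g_integrable hφ hM'
  have hc : (0:ℝ) < 8 * π * Real.sqrt 2 / 3 := by positivity
  apply mul_lt_mul_of_pos_left _ hc
  have hmono : ∀ x : R3, max (e - φ x) 0 ^ ((3:ℝ)/2) ≤ max (e' - φ x) 0 ^ ((3:ℝ)/2) :=
    fun x => Real.rpow_le_rpow (le_max_right _ _) (max_le_max (by linarith) le_rfl) (by norm_num)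
  have hdiff : 0 < ∫ x : R3,
      (max (e' - φ x) 0 ^ ((3:ℝ)/2) - max (e - φ x) 0 ^ ((3:ℝ)/2)) := by
    rw [integral_pos_iff_support_of_nonneg (fun x => sub_nonneg.2 (hmono x)) (hg'.sub hg)]
    have hopen : IsOpen {x : R3 | φ x < e'} := isOpen_lt hφ continuous_const
    have hsub : {x : R3 | φ x < e'} ⊆ Function.support
        (fun x => max (e' - φ x) 0 ^ ((3:ℝ)/2) - max (e - φ x) 0 ^ ((3:ℝ)/2)) := by
      intro x hx
      simp only [mem_setOf_eq] at hx
      have hlt : max (e - φ x) 0 ^ ((3:ℝ)/2) < max (e' - φ x) 0 ^ ((3:ℝ)/2) := by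
        rw [max_eq_left (by linarith : (0:ℝ) ≤ e' - φ x)]
        exact Real.rpow_lt_rpow (le_max_right _ _)
          (max_lt (by linarith) (by linarith)) (by norm_num)
      simp only [Function.mem_support]
      intro hzero
      linarith [sub_eq_zero.1 hzero]
    calc (0:ℝ≥0∞) < volume {x : R3 | φ x < e'} :=
          hopen.measure_pos volume ⟨x₀, by simp only [mem_setOf_eq]; linarith⟩
      _ ≤ _ := measure_mono hsub
  rw [integral_sub hg' hg] at hdiff
  linarith

theorem spherical_model_fixed_point (Q : R3 × R3 → ℝ)
    (hQc : Continuous Q) (hQpos : ∀ p, 0 ≤ Q p) (hQne : Q ≠ 0)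
    (hQsupp : HasCompactSupport Q)
    (F : ℝ → ℝ) (hFc : Continuous F) (e₀ : ℝ) (he₀ : e₀ < 0)
    (hF0 : ∀ e, e₀ ≤ e → F e = 0)
    (hF1 : ContDiffOn ℝ 1 F (Iio e₀))
    (hFdec : StrictAntiOn F (Iic e₀))
    (hQF : ∀ p : R3 × R3, Q p = F (‖p.2‖ ^ 2 / 2 + phiF Q p.1)) :
    (∀ e ∈ Ico (phiF Q (0 : R3)) (0 : ℝ), F e = schwarz Q (aphi (phiF Q) e)) ∧
    genRearr Q (phiF Q) = Q := by
  set φ : R3 → ℝ := phiF Q with hφdef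
  have hφc : Continuous φ := phi_cont hQc hQsupp
  have hdecay : ∀ e : ℝ, e < 0 → ∃ M : ℝ, ∀ x : R3, M ≤ ‖x‖ → e < φ x :=
    fun e he => phi_decay hQc hQpos hQsupp e he
  have Fnn : ∀ t, 0 ≤ F t := by
    intro t
    rcases le_or_gt e₀ t with h | h
    · rw [hF0 t h]
    · have := hFdec (le_of_lt h) (le_refl e₀) h
      rw [hF0 e₀ le_rfl] at this
      exact this.le
  have hvol : ∀ e : ℝ, e < 0 →
      volume {p : R3 × R3 | ‖p.2‖ ^ 2 / 2 + φ p.1 < e} = ENNReal.ofReal (aphi φ e) :=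
    fun e he => vol_sublevel φ hφc e (g_integrable hφc (hdecay e he))
  have key : ∀ e : ℝ, e < 0 → (∃ x : R3, φ x ≤ e) → F e = schwarz Q (aphi φ e) := by
    rintro e he ⟨x₀, hx₀⟩
    have hsubset1 : {p : R3 × R3 | Q p > F e} ⊆ {p : R3 × R3 | ‖p.2‖ ^ 2 / 2 + φ p.1 < e} := by
      intro p hp
      simp only [mem_setOf_eq] at hp ⊢
      rw [hQF p] at hp
      set Ep := ‖p.2‖ ^ 2 / 2 + φ p.1 with hEp
      have h1 : Ep < e₀ := by
        by_contra h
        push_neg at h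
        rw [hF0 Ep h] at hp
        exact absurd hp (not_lt.2 (Fnn e))
      rcases le_or_gt e₀ e with h2 | h2
      · exact lt_of_lt_of_le h1 h2
      · by_contra h3
        push_neg at h3
        rcases eq_or_lt_of_le h3 with h4 | h4
        · rw [h4] at hp; exact lt_irrefl _ hp
        · exact absurd hp (not_lt.2 (hFdec h2.le h1.le h4).le)
    have hAmem : F e ∈ {s : ℝ | 0 ≤ s ∧ distFun Q s ≤ ENNReal.ofReal (aphi φ e)} := by
      refine ⟨Fnn e, ?_⟩
      calc distFun Q (F e) ≤ volume {p : R3 × R3 | ‖p.2‖ ^ 2 / 2 + φ p.1 < e} :=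
            measure_mono hsubset1
        _ = ENNReal.ofReal (aphi φ e) := hvol e he
    have hlb : ∀ s ∈ {s : ℝ | 0 ≤ s ∧ distFun Q s ≤ ENNReal.ofReal (aphi φ e)}, F e ≤ s := by
      rintro s ⟨hs0, hsle⟩
      by_contra hcon
      push_neg at hcon
      have hFe : 0 < F e := lt_of_le_of_lt hs0 hcon
      have hee₀ : e < e₀ := by
        by_contra h
        push_neg at h
        rw [hF0 e h] at hFe
        exact lt_irrefl _ hFe
      have hopen : IsOpen {t : ℝ | s < F t} := isOpen_lt continuous_const hFc
      obtain ⟨δ, hδ0, hball⟩ := Metric.isOpen_iff.1 hopen e hcon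
      set e' := min (e + δ/2) ((e + e₀)/2) with he'def
      have he'1 : e < e' := lt_min (by linarith) (by linarith)
      have he'2 : e' < e₀ := lt_of_le_of_lt (min_le_right _ _) (by linarith)
      have he'0 : e' < 0 := lt_trans he'2 he₀
      have he's : s < F e' := by
        apply hball
        rw [Metric.mem_ball, Real.dist_eq, abs_of_pos (by linarith)]
        have := min_le_left (e + δ/2) ((e + e₀)/2)
        linarith
      have hsubset2 : {p : R3 × R3 | ‖p.2‖ ^ 2 / 2 + φ p.1 < e'} ⊆ {p : R3 × R3 | Q p > s} := by
        intro p hp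
        simp only [mem_setOf_eq] at hp ⊢
        rw [hQF p]
        calc s < F e' := he's
          _ < F (‖p.2‖ ^ 2 / 2 + φ p.1) := hFdec (mem_Iic.mpr (by linarith)) (mem_Iic.mpr he'2.le) hp
      have hge' : ENNReal.ofReal (aphi φ e') ≤ distFun Q s := by
        calc ENNReal.ofReal (aphi φ e')
            = volume {p : R3 × R3 | ‖p.2‖ ^ 2 / 2 + φ p.1 < e'} := (hvol e' he'0).symm
          _ ≤ distFun Q s := measure_mono hsubset2
      have hstrict : ENNReal.ofReal (aphi φ e) < ENNReal.ofReal (aphi φ e') := by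
        have h1 : aphi φ e < aphi φ e' :=
          aphi_strict hφc he'1 (hdecay e he) (hdecay e' he'0) x₀ hx₀
        rw [ENNReal.ofReal_lt_ofReal_iff (lt_of_le_of_lt (aphi_nonneg e) h1)]
        exact h1
      exact lt_irrefl _ (lt_of_le_of_lt (le_trans hge' hsle) hstrict)
    unfold schwarz
    exact le_antisymm (le_csInf ⟨F e, hAmem⟩ hlb)
      (csInf_le ⟨0, fun s hs => hs.1⟩ hAmem)
  constructor
  · rintro e ⟨h1, h2⟩
    exact key e h2 ⟨0, h1⟩
  · funext p
    unfold genRearr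
    split_ifs with h
    · rw [hQF p]
      refine (key _ h ⟨p.1, ?_⟩).symm
      have : (0:ℝ) ≤ ‖p.2‖ ^ 2 / 2 := by positivity
      linarith
    · rw [hQF p]
      push_neg at h
      exact (hF0 _ (by linarith)).symm
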